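/- arXiv:0812.2668 — 7 statements merged into one kernel-verified Lean document; each statement's English description precedes it below -/
import Mathlib

section
/- Let V_1, ..., V_{n²} be matrices in M_n(ℂ). Then the following are equivalent: (1) Tr(V_i* V_j) = δ_{ij} for all 1 ≤ i, j ≤ n²; (2) for every A ∈ M_n(ℂ), the sum over i of V_i* A V_i equals (Tr A)·I. -/
open Matrix BigOperators

/-- For n² matrices V_i in M_n(ℂ): they form an orthonormal system w.r.t. the
Hilbert–Schmidt inner product iff ∑_i V_i* A V_i = (Tr A)·I for every A. -/
theorem orthonormal_iff_sum_conj_eq_trace_smul_one (n : ℕ)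
    (V : Fin (n ^ 2) → Matrix (Fin n) (Fin n) ℂ) :
    (∀ i j, ((V i)ᴴ * V j).trace = if i = j then (1 : ℂ) else 0) ↔
      (∀ A : Matrix (Fin n) (Fin n) ℂ,
        ∑ i, (V i)ᴴ * A * V i = A.trace • (1 : Matrix (Fin n) (Fin n) ℂ)) := by
  classical
  have card : Fintype.card (Fin n × Fin n) = n ^ 2 := by simp [sq]
  let e : Fin n × Fin n ≃ Fin (n ^ 2) := Fintype.equivFinOfCardEq card
  set T : Matrix (Fin (n ^ 2)) (Fin (n ^ 2)) ℂ :=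
    fun k i => V i (e.symm k).1 (e.symm k).2 with hT
  -- Gram entries of T equal HS inner products
  have key : ∀ i j, (Tᴴ * T) i j = ((V i)ᴴ * V j).trace := by
    intro i j
    have h1 : (Tᴴ * T) i j
        = ∑ p : Fin n × Fin n, star (V i p.1 p.2) * V j p.1 p.2 := by
      rw [Matrix.mul_apply,
        ← Equiv.sum_comp e.symm (fun p => star (V i p.1 p.2) * V j p.1 p.2)]
      simp [hT, Matrix.conjTranspose_apply]
      exact Finset.sum_congr rfl fun x _ => rfl
    rw [h1, Matrix.trace]
    simp only [Matrix.diag, Matrix.mul_apply, Matrix.conjTranspose_apply]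
    rw [Fintype.sum_prod_type]
    exact Finset.sum_comm
  -- entries of T * Tᴴ
  have keyS : ∀ x y a b : Fin n,
      (T * Tᴴ) (e (x, a)) (e (y, b)) = ∑ i, star (V i y b) * V i x a := by
    intro x y a b
    rw [Matrix.mul_apply]
    simp only [hT, Matrix.conjTranspose_apply, Equiv.symm_apply_apply]
    exact Finset.sum_congr rfl fun i _ => by
      rw [mul_comm]; congr 1
      show star (V i (e.symm (e (y, b))).1 (e.symm (e (y, b))).2) = _
      rw [Equiv.symm_apply_apply]
  have hGram : (∀ i j, ((V i)ᴴ * V j).trace = if i = j then (1:ℂ) else 0)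
      ↔ Tᴴ * T = 1 := by
    constructor
    · intro h; ext i j; rw [key i j, h i j, Matrix.one_apply]
    · intro h i j; rw [← key i j, h, Matrix.one_apply]
  have hS : (T * Tᴴ = 1) ↔
      ∀ x y a b : Fin n, ∑ i, star (V i x a) * V i y b
        = if (x, a) = (y, b) then (1:ℂ) else 0 := by
    constructor
    · intro h x y a b
      have h1 := keyS y x b a
      rw [h, Matrix.one_apply] at h1
      rw [← h1]
      exact if_congr (e.apply_eq_iff_eq.trans eq_comm) rfl rfl
    · intro h
      ext k l
      obtain ⟨⟨x, a⟩, rfl⟩ : ∃ p, e p = k := ⟨e.symm k, e.apply_symm_apply k⟩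
      obtain ⟨⟨y, b⟩, rfl⟩ : ∃ p, e p = l := ⟨e.symm l, e.apply_symm_apply l⟩
      rw [keyS, h y x b a, Matrix.one_apply]
      exact if_congr (eq_comm.trans e.apply_eq_iff_eq.symm) rfl rfl
  rw [hGram]
  constructor
  · -- Tᴴ T = 1 → (2)
    intro h A
    have hs := hS.mp (mul_eq_one_comm.mp h)
    ext a b
    rw [Matrix.sum_apply]
    simp only [Matrix.mul_apply, Matrix.conjTranspose_apply, Matrix.smul_apply,
      Matrix.one_apply, Matrix.trace, Matrix.diag, smul_eq_mul]
    calc ∑ i, ∑ y, (∑ x, star (V i x a) * A x y) * V i y b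
        = ∑ i, ∑ x, ∑ y, A x y * (star (V i x a) * V i y b) := by
          refine Finset.sum_congr rfl fun i _ => ?_
          simp only [Finset.sum_mul]
          rw [Finset.sum_comm]
          exact Finset.sum_congr rfl fun x _ => Finset.sum_congr rfl fun y _ => by ring
      _ = ∑ x, ∑ y, A x y * ∑ i, star (V i x a) * V i y b := by
          rw [Finset.sum_comm]
          refine Finset.sum_congr rfl fun x _ => ?_
          rw [Finset.sum_comm]
          exact Finset.sum_congr rfl fun y _ => (Finset.mul_sum _ _ _).symm
      _ = ∑ x, ∑ y, A x y * if (x, a) = (y, b) then 1 else 0 := by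
          refine Finset.sum_congr rfl fun x _ => Finset.sum_congr rfl fun y _ => ?_
          rw [hs x y a b]
      _ = (∑ x, A x x) * if a = b then 1 else 0 := by
          by_cases hab : a = b
          · subst hab
            simp only [Prod.mk.injEq, and_true, mul_ite, mul_one, mul_zero, if_true,
              mul_one]
            rw [Finset.sum_congr rfl fun x _ => Finset.sum_ite_eq (Finset.univ) x (fun y => A x y) ]
            simp
          · simp [Prod.ext_iff, hab]
  · -- (2) → Tᴴ T = 1
    intro h
    rw [← mul_eq_one_comm, hS]
    intro x y a b
    have h1 := congrFun (congrFun (h (Matrix.single x y 1)) a) b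
    rw [Matrix.sum_apply] at h1
    simp only [Matrix.mul_apply, Matrix.conjTranspose_apply, Matrix.smul_apply,
      Matrix.one_apply, smul_eq_mul, Matrix.single, Matrix.of_apply] at h1
    rw [Matrix.trace] at h1
    simp only [Matrix.diag, Matrix.single, Matrix.of_apply] at h1
    -- simplify LHS of h1
    have hL : ∀ i, (∑ c, (∑ d, star (V i d a) * if x = d ∧ y = c then (1:ℂ) else 0) * V i c b)
        = star (V i x a) * V i y b := by
      intro i
      rw [Finset.sum_eq_single y]
      · congr 1
        rw [Finset.sum_eq_single x]
        · simp
        · intro d _ hd; simp [Ne.symm hd]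
        · simp
      · intro c _ hc
        have : (∑ d, star (V i d a) * if x = d ∧ y = c then (1:ℂ) else 0) = 0 := by
          refine Finset.sum_eq_zero fun d _ => ?_
          simp [Ne.symm hc]
        rw [this, zero_mul]
      · simp
    rw [Finset.sum_congr rfl (fun i _ => hL i)] at h1
    have hR : (∑ c : Fin n, if x = c ∧ y = c then (1:ℂ) else 0) = if x = y then 1 else 0 := by
      by_cases hxy : x = y
      · subst hxy; simp
      · refine (Finset.sum_eq_zero fun c _ => ?_).trans (by simp [hxy])
        by_cases hc : x = c
        · subst hc; simp [Ne.symm, hxy]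
        · simp [hc]
    rw [hR] at h1
    rw [h1]
    by_cases hxy : x = y <;> by_cases hab : a = b <;>
      simp [Prod.ext_iff, hxy, hab]
end

section
/- If W ∈ M_n(ℂ) satisfies Tr(W W*) = 1, then the matrix P = Σ_{i,j} (W* E_{ij} W) ⊗ E_{ij} in M_n(ℂ) ⊗ M_n(ℂ) is a projection, i.e., P is self-adjoint and P² = P. -/
open Matrix BigOperators
open scoped Kronecker

/-- If Tr(W W*) = 1 then P = ∑_{i,j} (W* E_{ij} W) ⊗ E_{ij} is a projection. -/
theorem kron_sum_isProjection (n : ℕ) (W : Matrix (Fin n) (Fin n) ℂ)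
    (hW : (W * Wᴴ).trace = 1)
    (P : Matrix (Fin n × Fin n) (Fin n × Fin n) ℂ)
    (hP : P = ∑ i : Fin n, ∑ j : Fin n,
      (Wᴴ * Matrix.single i j (1 : ℂ) * W) ⊗ₖ Matrix.single i j (1 : ℂ)) :
    Pᴴ = P ∧ P * P = P := by
  have key : ∀ a c : Fin n × Fin n,
      P a c = (starRingEnd ℂ) (W a.2 a.1) * W c.2 c.1 := by
    intro a c
    subst hP
    simp [Matrix.sum_apply, Matrix.kroneckerMap_apply, Matrix.mul_apply,
      Matrix.single, Matrix.conjTranspose_apply, Finset.sum_ite_eq,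
      ite_and, Finset.mul_sum, Finset.sum_mul, mul_comm]
  have htr : ∑ e : Fin n × Fin n, W e.2 e.1 * (starRingEnd ℂ) (W e.2 e.1) = 1 := by
    rw [← hW, Matrix.trace]
    simp only [Matrix.diag_apply, Matrix.mul_apply, Matrix.conjTranspose_apply]
    rw [Fintype.sum_prod_type_right]
    rfl
  constructor
  · ext a c
    rw [Matrix.conjTranspose_apply, key, key]
    simp [mul_comm]
  · ext a c
    rw [Matrix.mul_apply, key a c]
    simp only [key]
    calc ∑ e : Fin n × Fin n,
          (starRingEnd ℂ) (W a.2 a.1) * W e.2 e.1 * ((starRingEnd ℂ) (W e.2 e.1) * W c.2 c.1)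
        = ((starRingEnd ℂ) (W a.2 a.1) * W c.2 c.1) *
            ∑ e : Fin n × Fin n, W e.2 e.1 * (starRingEnd ℂ) (W e.2 e.1) := by
          rw [Finset.mul_sum]; apply Finset.sum_congr rfl; intros; ring
      _ = (starRingEnd ℂ) (W a.2 a.1) * W c.2 c.1 := by rw [htr, mul_one]
end

section
/- Let {U_i : 1 ≤ i ≤ m} be an orthonormal system in M_n(ℂ) (i.e., Tr(U_i* U_j) = δ_{ij}) and μ_1, ..., μ_m real numbers. Then the linear map α : M_n(ℂ) → M_n(ℂ) defined by α(A) = Σ_i μ_i U_i* A U_i is completely positive if and only if μ_i ≥ 0 for every i. -/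
open Matrix BigOperators
open scoped Kronecker ComplexOrder

/-- The Choi matrix of a map Φ : M_n(ℂ) → M_n(ℂ). -/
noncomputable def choiMatrix {n : ℕ}
    (Φ : Matrix (Fin n) (Fin n) ℂ → Matrix (Fin n) (Fin n) ℂ) :
    Matrix (Fin n × Fin n) (Fin n × Fin n) ℂ :=
  ∑ i : Fin n, ∑ j : Fin n,
    Φ (Matrix.single i j (1 : ℂ)) ⊗ₖ Matrix.single i j (1 : ℂ)

/-- Complete positivity via Choi's theorem: Φ is completely positive iff its
Choi matrix is positive semidefinite. -/
noncomputable def IsCompletelyPositive {n : ℕ}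
    (Φ : Matrix (Fin n) (Fin n) ℂ → Matrix (Fin n) (Fin n) ℂ) : Prop :=
  (choiMatrix Φ).PosSemidef

lemma aux_vecMulVec_mulVec {ι : Type*} [Fintype ι] (w u x : ι → ℂ) :
    Matrix.vecMulVec w u *ᵥ x = (u ⬝ᵥ x) • w := by
  ext i
  simp only [Matrix.mulVec, Matrix.vecMulVec_apply, dotProduct, Pi.smul_apply,
    smul_eq_mul, Finset.sum_mul]
  exact Finset.sum_congr rfl fun j _ => by ring

lemma aux_sum_mulVec {ι κ : Type*} [Fintype ι] (s : Finset κ)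
    (f : κ → Matrix ι ι ℂ) (x : ι → ℂ) :
    (∑ k ∈ s, f k) *ᵥ x = ∑ k ∈ s, f k *ᵥ x := by
  ext i
  simp only [Matrix.mulVec, dotProduct, Matrix.sum_apply, Finset.sum_apply,
    Finset.sum_mul]
  exact Finset.sum_comm

lemma aux_dotProduct_sum {ι κ : Type*} [Fintype ι] (s : Finset κ)
    (v : ι → ℂ) (w : κ → ι → ℂ) :
    v ⬝ᵥ (∑ k ∈ s, w k) = ∑ k ∈ s, v ⬝ᵥ w k := by
  simp only [dotProduct, Finset.sum_apply, Finset.mul_sum]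
  exact Finset.sum_comm

lemma vecMulVec_star_posSemidef {ι : Type*} [Fintype ι]
    (v : ι → ℂ) : (Matrix.vecMulVec v (star v)).PosSemidef := by
  rw [Matrix.posSemidef_iff_dotProduct_mulVec]
  constructor
  · ext i j
    simp [Matrix.vecMulVec_apply, Matrix.conjTranspose_apply, mul_comm]
  · intro x
    rw [aux_vecMulVec_mulVec, dotProduct_smul, smul_eq_mul]
    rw [star_dotProduct]
    exact star_mul_self_nonneg _

lemma aux_sandwich {n : ℕ} (M : Matrix (Fin n) (Fin n) ℂ) (i j a c : Fin n) :
    (Mᴴ * Matrix.single i j (1 : ℂ) * M) a c = star (M i a) * M j c := by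
  rw [mul_assoc, Matrix.mul_apply, Finset.sum_eq_single i]
  · simp [Matrix.conjTranspose_apply]
  · intro p _ hp
    simp [hp]
  · simp

/-- For an orthonormal system {U_i} in M_n(ℂ), the map A ↦ ∑ μ_i U_i* A U_i is
completely positive iff all μ_i ≥ 0. -/
theorem completelyPositive_iff_nonneg_coeffs (n m : ℕ)
    (U : Fin m → Matrix (Fin n) (Fin n) ℂ)
    (hU : ∀ i j, ((U i)ᴴ * U j).trace = if i = j then (1 : ℂ) else 0)
    (μ : Fin m → ℝ)
    (α : Matrix (Fin n) (Fin n) ℂ → Matrix (Fin n) (Fin n) ℂ)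
    (hα : ∀ A, α A = ∑ i, (μ i : ℂ) • ((U i)ᴴ * A * U i)) :
    IsCompletelyPositive α ↔ ∀ i, 0 ≤ μ i := by
  set v : Fin m → (Fin n × Fin n) → ℂ := fun k p => star (U k p.2 p.1) with hv
  have choi_eq : choiMatrix α =
      ∑ k, (μ k : ℂ) • Matrix.vecMulVec (v k) (star (v k)) := by
    ext ⟨a, b⟩ ⟨c, d⟩
    simp only [choiMatrix, Matrix.sum_apply, Matrix.kroneckerMap_apply, hα,
      Matrix.smul_apply, Matrix.vecMulVec_apply, smul_eq_mul, aux_sandwich]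
    have hstep : ∀ i j : Fin n,
        (∑ k, (μ k : ℂ) * (star (U k i a) * U k j c)) *
          Matrix.single i j (1 : ℂ) b d
        = if i = b ∧ j = d then ∑ k, (μ k : ℂ) * (star (U k i a) * U k j c)
          else 0 := by
      intro i j
      by_cases h : i = b ∧ j = d
      · obtain ⟨h1, h2⟩ := h
        subst h1; subst h2
        rw [Matrix.single_apply_same, mul_one, if_pos ⟨rfl, rfl⟩]
      · rw [Matrix.single_apply_of_ne _ _ _ _ _ h, mul_zero, if_neg h]
    rw [Finset.sum_congr rfl fun i _ => Finset.sum_congr rfl fun j _ => hstep i j]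
    rw [Finset.sum_comm]
    rw [Finset.sum_eq_single d]
    · rw [Finset.sum_eq_single b]
      · simp only [and_self, if_true]
        refine Finset.sum_congr rfl fun k _ => ?_
        simp only [hv, Pi.star_apply, star_star]
      · intro i _ hi; simp [hi]
      · simp
    · intro j _ hj
      rw [Finset.sum_eq_zero]
      intro i _
      simp [hj]
    · simp
  have key : ∀ k l, star (v k) ⬝ᵥ v l = if l = k then (1 : ℂ) else 0 := by
    intro k l
    rw [← hU l k]
    simp only [Matrix.trace, Matrix.diag, Matrix.mul_apply,
      Matrix.conjTranspose_apply, dotProduct, hv, Pi.star_apply, star_star]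
    rw [Fintype.sum_prod_type]
    refine Finset.sum_congr rfl fun a _ => Finset.sum_congr rfl fun b _ => ?_
    ring
  constructor
  · intro hcp i
    have h := hcp.dotProduct_mulVec_nonneg (v i)
    rw [choi_eq, aux_sum_mulVec, aux_dotProduct_sum] at h
    have hval : ∀ k, star (v i) ⬝ᵥ (((μ k : ℂ) • Matrix.vecMulVec (v k) (star (v k))) *ᵥ v i)
        = (μ k : ℂ) * (if i = k then 1 else 0) := by
      intro k
      rw [Matrix.smul_mulVec, aux_vecMulVec_mulVec, dotProduct_smul,
        dotProduct_smul, key k i, key i k, smul_eq_mul, smul_eq_mul]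
      by_cases hik : i = k
      · subst hik; simp
      · rw [if_neg hik, if_neg (Ne.symm hik)]
        ring
    simp only [hval, mul_ite, mul_one, mul_zero] at h
    rw [Finset.sum_ite_eq, if_pos (Finset.mem_univ i)] at h
    exact Complex.zero_le_real.mp h
  · intro hμ
    rw [IsCompletelyPositive, choi_eq]
    have : ∀ k : Fin m, ((μ k : ℂ) • Matrix.vecMulVec (v k) (star (v k))).PosSemidef := by
      intro k
      have heq : (μ k : ℂ) • Matrix.vecMulVec (v k) (star (v k))
          = Matrix.vecMulVec ((Real.sqrt (μ k) : ℂ) • v k)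
              (star ((Real.sqrt (μ k) : ℂ) • v k)) := by
        ext p q
        simp only [Matrix.smul_apply, Matrix.vecMulVec_apply, Pi.star_apply,
          Pi.smul_apply, smul_eq_mul, star_mul']
        rw [show star ((Real.sqrt (μ k) : ℂ)) = (Real.sqrt (μ k) : ℂ) from
          Complex.conj_ofReal _]
        have : ((Real.sqrt (μ k) : ℂ)) * (Real.sqrt (μ k) : ℂ) = (μ k : ℂ) := by
          rw [← Complex.ofReal_mul, Real.mul_self_sqrt (hμ k)]
        calc (μ k : ℂ) * (v k p * star (v k q))
            = ((Real.sqrt (μ k) : ℂ) * (Real.sqrt (μ k) : ℂ)) * (v k p * star (v k q)) := by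
              rw [this]
          _ = (Real.sqrt (μ k) : ℂ) * v k p * ((Real.sqrt (μ k) : ℂ) * star (v k q)) := by
              ring
      rw [heq]
      exact vecMulVec_star_posSemidef _
    refine Finset.sum_induction _ _ (fun A B hA hB => hA.add hB)
      Matrix.PosSemidef.zero (fun k _ => this k)
end

section
/- The set of triples (λ_1, λ_2, λ_3) ∈ ℝ³ satisfying 1 + λ_3 ≥ |λ_1 + λ_2| and 1 − λ_3 ≥ |λ_1 − λ_2| equals the convex hull of the four points (1,1,1), (1,−1,−1), (−1,1,−1), (−1,−1,1). -/
/-- The region 1 + λ₃ ≥ |λ₁ + λ₂| ∧ 1 − λ₃ ≥ |λ₁ − λ₂| in ℝ³ is the convex hull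
of the four points (1,1,1), (1,−1,−1), (−1,1,−1), (−1,−1,1). -/
theorem pauli_region_eq_convexHull :
    {p : ℝ × ℝ × ℝ | |p.1 + p.2.1| ≤ 1 + p.2.2 ∧ |p.1 - p.2.1| ≤ 1 - p.2.2}
      = convexHull ℝ
          ({(1, 1, 1), (1, -1, -1), (-1, 1, -1), (-1, -1, 1)} : Set (ℝ × ℝ × ℝ)) := by
  apply Set.Subset.antisymm
  · rintro ⟨x, y, z⟩ ⟨h1, h2⟩
    rw [abs_le] at h1 h2
    set w : Fin 4 → ℝ := ![(1+x+y+z)/4, (1+x-y-z)/4, (1-x+y-z)/4, (1-x-y+z)/4] with hw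
    set f : Fin 4 → ℝ × ℝ × ℝ := ![(1,1,1),(1,-1,-1),(-1,1,-1),(-1,-1,1)] with hf
    have hwnn : ∀ i ∈ (Finset.univ : Finset (Fin 4)), 0 ≤ w i := by
      intro i _
      fin_cases i <;> simp [hw] <;> linarith [h1.1, h1.2, h2.1, h2.2]
    have hwsum : ∑ i : Fin 4, w i = 1 := by
      simp [hw, Fin.sum_univ_four]; ring
    have hmem : ∀ i ∈ (Finset.univ : Finset (Fin 4)), f i ∈
        ({(1, 1, 1), (1, -1, -1), (-1, 1, -1), (-1, -1, 1)} : Set (ℝ × ℝ × ℝ)) := by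
      intro i _; fin_cases i <;> simp [hf]
    have := Finset.centerMass_mem_convexHull (Finset.univ : Finset (Fin 4)) hwnn
      (by rw [hwsum]; norm_num) hmem
    have hcm : (Finset.univ : Finset (Fin 4)).centerMass w f = (x, y, z) := by
      rw [Finset.centerMass, hwsum, inv_one, one_smul, Fin.sum_univ_four]
      simp only [hw, hf]
      ext <;> simp [Prod.smul_def] <;> ring
    rwa [hcm] at this
  · apply convexHull_min
    · rintro p (rfl | rfl | rfl | rfl) <;> constructor <;> norm_num
    · rintro ⟨x1, y1, z1⟩ ⟨hp1, hp2⟩ ⟨x2, y2, z2⟩ ⟨hq1, hq2⟩ a b ha hb hab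
      rw [abs_le] at hp1 hp2 hq1 hq2
      constructor <;> rw [abs_le] <;> constructor <;>
        simp only [Prod.fst_add, Prod.snd_add, Prod.smul_fst, Prod.smul_snd,
          smul_eq_mul, Prod.mk_add_mk, Prod.smul_mk] <;>
        nlinarith [mul_le_mul_of_nonneg_left hp1.1 ha, mul_le_mul_of_nonneg_left hp1.2 ha,
          mul_le_mul_of_nonneg_left hp2.1 ha, mul_le_mul_of_nonneg_left hp2.2 ha,
          mul_le_mul_of_nonneg_left hq1.1 hb, mul_le_mul_of_nonneg_left hq1.2 hb,
          mul_le_mul_of_nonneg_left hq2.1 hb, mul_le_mul_of_nonneg_left hq2.2 hb]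
end

section
/- Let 𝒜 ⊂ M_n(ℂ) be a subalgebra unitarily equivalent to ⊕_l M_{n_l} ⊗ I_{m_l} with all ratios n_l/m_l equal, and {U_i}_{i=1}^{dim 𝒜} an orthonormal basis of 𝒜. Then X ↦ (n / dim 𝒜) Σ_i U_i* X U_i is the trace-preserving conditional expectation from M_n(ℂ) onto the commutant 𝒜′ (i.e., the orthogonal projection onto 𝒜′ with respect to the Hilbert–Schmidt inner product). -/
open Matrix BigOperators

/-- The commutant of a set of matrices. -/
def matCommutant {ι : Type*} [Fintype ι] [DecidableEq ι]
    (S : Set (Matrix ι ι ℂ)) : Set (Matrix ι ι ℂ) :=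
  {X | ∀ A ∈ S, A * X = X * A}

/-- `E` is the trace-preserving conditional expectation onto `S`, i.e. the
orthogonal projection onto `S` w.r.t. the Hilbert–Schmidt inner product:
E X lies in S and X − E X is HS-orthogonal to S. -/
def IsCondExp {ι : Type*} [Fintype ι] [DecidableEq ι]
    (S : Set (Matrix ι ι ℂ)) (E : Matrix ι ι ℂ → Matrix ι ι ℂ) : Prop :=
  (∀ X, E X ∈ S) ∧ (∀ X, ∀ A ∈ S, (Aᴴ * (X - E X)).trace = 0)

/-- Block-diagonal embedding of ⊕_l M_{n_l} ⊗ I_{m_l}. -/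
def blockEmbed {k : ℕ} (nl ml : Fin k → ℕ)
    (A : ∀ l, Matrix (Fin (nl l)) (Fin (nl l)) ℂ) :
    Matrix ((l : Fin k) × (Fin (nl l) × Fin (ml l)))
      ((l : Fin k) × (Fin (nl l) × Fin (ml l))) ℂ :=
  Matrix.of fun p q =>
    if h : p.1 = q.1 then
      if Fin.cast (congrArg ml h) p.2.2 = q.2.2 then
        A q.1 (Fin.cast (congrArg nl h) p.2.1) q.2.1
      else 0
    else 0

/- ===================== auxiliary lemmas ===================== -/

section BEAux
variable {k : ℕ} (nl ml : Fin k → ℕ)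

lemma bE_mul (A B : ∀ l, Matrix (Fin (nl l)) (Fin (nl l)) ℂ) :
    blockEmbed nl ml A * blockEmbed nl ml B = blockEmbed nl ml (fun l => A l * B l) := by
  ext p q
  obtain ⟨pl, pa, ps⟩ := p
  obtain ⟨ql, qa, qs⟩ := q
  rw [mul_apply, ← Finset.univ_sigma_univ, Finset.sum_sigma]
  rw [Finset.sum_eq_single pl]
  · rw [Fintype.sum_prod_type]
    by_cases h : pl = ql
    · subst h
      by_cases h2 : ps = qs
      · subst h2
        simp only [blockEmbed, of_apply, dif_pos rfl, Fin.cast_eq_self, if_pos rfl, mul_apply]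
        apply Finset.sum_congr rfl
        intro ra _
        rw [Finset.sum_eq_single ps]
        · simp
        · intro b _ hbb
          simp [Ne.symm hbb]
        · simp
      · simp only [blockEmbed, of_apply, dif_pos rfl, Fin.cast_eq_self, if_neg h2]
        apply Finset.sum_eq_zero; intro ra _
        apply Finset.sum_eq_zero; intro rs _
        by_cases h3 : ps = rs
        · subst h3; simp [h2]
        · simp [h3]
    · simp only [blockEmbed, of_apply, dif_neg h, dif_pos rfl, Fin.cast_eq_self]
      apply Finset.sum_eq_zero; intro ra _
      apply Finset.sum_eq_zero; intro rs _
      simp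
  · intro b _ hb
    apply Finset.sum_eq_zero
    rintro ⟨ra, rs⟩ _
    simp only [blockEmbed, of_apply]
    rw [dif_neg (fun hh : pl = b => hb hh.symm), zero_mul]
  · simp

lemma bE_conjT (A : ∀ l, Matrix (Fin (nl l)) (Fin (nl l)) ℂ) :
    (blockEmbed nl ml A)ᴴ = blockEmbed nl ml (fun l => (A l)ᴴ) := by
  ext p q
  obtain ⟨pl, pa, ps⟩ := p
  obtain ⟨ql, qa, qs⟩ := q
  simp only [conjTranspose_apply, blockEmbed, of_apply]
  by_cases h : pl = ql
  · subst h
    simp only [dif_pos rfl, Fin.cast_eq_self]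
    by_cases h2 : ps = qs
    · subst h2; simp
    · simp [h2, Ne.symm h2]
  · rw [dif_neg h, dif_neg (Ne.symm h)]; simp

lemma bE_one : blockEmbed nl ml (fun _ => 1) = 1 := by
  ext p q
  obtain ⟨pl, pa, ps⟩ := p
  obtain ⟨ql, qa, qs⟩ := q
  simp only [blockEmbed, of_apply]
  by_cases h : pl = ql
  · subst h
    simp only [dif_pos rfl, Fin.cast_eq_self, Matrix.one_apply]
    by_cases h2 : ps = qs
    · subst h2
      by_cases h3 : pa = qa
      · subst h3; simp
      · simp [h3, Sigma.ext_iff, Prod.ext_iff]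
    · simp [h2, Sigma.ext_iff, Prod.ext_iff]
  · rw [dif_neg h]
    exact (Matrix.one_apply_ne (fun hh => h (congrArg Sigma.fst hh))).symm

lemma bE_trace (A : ∀ l, Matrix (Fin (nl l)) (Fin (nl l)) ℂ) :
    (blockEmbed nl ml A).trace = ∑ l, (ml l : ℂ) * (A l).trace := by
  rw [Matrix.trace, ← Finset.univ_sigma_univ]
  unfold Matrix.diag
  rw [Finset.sum_sigma]
  apply Finset.sum_congr rfl
  intro l _
  rw [Fintype.sum_prod_type]
  simp only [blockEmbed, of_apply, dif_pos rfl, Fin.cast_eq_self, if_pos rfl]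
  rw [Matrix.trace, Finset.mul_sum]
  rw [Finset.sum_comm]
  simp only [Matrix.diag, dite_true, if_true]
  rw [Finset.sum_comm]
  exact Finset.sum_congr rfl (fun a _ => by rw [Finset.sum_const, nsmul_eq_mul]; simp)

lemma bE_add (A B : ∀ l, Matrix (Fin (nl l)) (Fin (nl l)) ℂ) :
    blockEmbed nl ml (A + B) = blockEmbed nl ml A + blockEmbed nl ml B := by
  ext p q
  simp only [blockEmbed, of_apply, Matrix.add_apply, Pi.add_apply]
  split
  · split <;> simp
  · simp

lemma bE_smul (c : ℂ) (A : ∀ l, Matrix (Fin (nl l)) (Fin (nl l)) ℂ) :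
    blockEmbed nl ml (c • A) = c • blockEmbed nl ml A := by
  ext p q
  simp only [blockEmbed, of_apply, Matrix.smul_apply, Pi.smul_apply]
  split
  · split <;> simp
  · simp

/-- `blockEmbed` as a linear map. -/
def bEL : (∀ l, Matrix (Fin (nl l)) (Fin (nl l)) ℂ) →ₗ[ℂ]
    Matrix ((l : Fin k) × (Fin (nl l) × Fin (ml l)))
      ((l : Fin k) × (Fin (nl l) × Fin (ml l))) ℂ where
  toFun := blockEmbed nl ml
  map_add' := bE_add nl ml
  map_smul' := bE_smul nl ml

lemma bE_congr (A B : ∀ l, Matrix (Fin (nl l)) (Fin (nl l)) ℂ)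
    (h : ∀ l, 0 < nl l → 0 < ml l → A l = B l) :
    blockEmbed nl ml A = blockEmbed nl ml B := by
  ext p q
  obtain ⟨ql, qa, qs⟩ := q
  simp only [blockEmbed, of_apply]
  split
  · rw [h ql qa.pos qs.pos]
  · rfl

end BEAux

set_option linter.unusedSectionVars false

section ONBAux
variable {m ι₁ ι₂ : Type*} [Fintype m] [DecidableEq m] [Fintype ι₁] [Fintype ι₂]
  [DecidableEq ι₁] [DecidableEq ι₂]

lemma star_trace_pair (X Y : Matrix m m ℂ) :
    star ((Xᴴ * Y).trace) = (Yᴴ * X).trace := by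
  rw [← Matrix.trace_conjTranspose, Matrix.conjTranspose_mul, Matrix.conjTranspose_conjTranspose]

lemma expandONB (W : ι₂ → Matrix m m ℂ) (g : ι₂ → ℂ) (hg : ∀ j, g j ≠ 0)
    (hW : ∀ p q, ((W p)ᴴ * W q).trace = if p = q then g p else 0)
    (B : Matrix m m ℂ) (hB : B ∈ Submodule.span ℂ (Set.range W)) :
    ∑ j, ((g j)⁻¹ * ((W j)ᴴ * B).trace) • W j = B := by
  rw [Submodule.mem_span_range_iff_exists_fun] at hB
  obtain ⟨f, hf⟩ := hB
  have hco : ∀ p, ((W p)ᴴ * B).trace = f p * g p := by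
    intro p
    rw [← hf, Matrix.mul_sum, Matrix.trace_sum]
    rw [Finset.sum_eq_single p]
    · rw [Matrix.mul_smul, Matrix.trace_smul, hW, if_pos rfl, smul_eq_mul]
    · intro b _ hb
      rw [Matrix.mul_smul, Matrix.trace_smul, hW, if_neg (Ne.symm hb), smul_zero]
    · simp
  have hcoef : ∀ j, (g j)⁻¹ * ((W j)ᴴ * B).trace = f j := by
    intro j; rw [hco]; field_simp [hg j]
  simp_rw [hcoef]; exact hf

lemma expandONB' (U : ι₁ → Matrix m m ℂ)
    (hU : ∀ i j, ((U i)ᴴ * U j).trace = if i = j then (1:ℂ) else 0)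
    (B : Matrix m m ℂ) (hB : B ∈ Submodule.span ℂ (Set.range U)) :
    ∑ i, (((U i)ᴴ * B).trace) • U i = B := by
  have := expandONB U (fun _ => (1:ℂ)) (fun _ => one_ne_zero) hU B hB
  simpa using this

lemma sumONB (U : ι₁ → Matrix m m ℂ) (W : ι₂ → Matrix m m ℂ) (g : ι₂ → ℂ) (hg : ∀ j, g j ≠ 0)
    (hU : ∀ i j, ((U i)ᴴ * U j).trace = if i = j then (1:ℂ) else 0)
    (hW : ∀ p q, ((W p)ᴴ * W q).trace = if p = q then g p else 0)
    (hUW : ∀ i, U i ∈ Submodule.span ℂ (Set.range W))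
    (hWU : ∀ j, W j ∈ Submodule.span ℂ (Set.range U)) :
    ∑ i, U i * (U i)ᴴ = ∑ j, (g j)⁻¹ • (W j * (W j)ᴴ) := by
  have expU : ∀ i, ∑ j, ((g j)⁻¹ * ((W j)ᴴ * U i).trace) • W j = U i := fun i =>
    expandONB W g hg hW (U i) (hUW i)
  have expW : ∀ j, ∑ i, (((U i)ᴴ * W j).trace) • U i = W j := fun j =>
    expandONB' U hU (W j) (hWU j)
  calc ∑ i, U i * (U i)ᴴ
      = ∑ i, (∑ j, ((g j)⁻¹ * ((W j)ᴴ * U i).trace) • W j) * (U i)ᴴ := by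
        simp_rw [expU]
    _ = ∑ j, (g j)⁻¹ • (W j * (W j)ᴴ) := by
        simp_rw [Finset.sum_mul, Matrix.smul_mul]
        rw [Finset.sum_comm]
        apply Finset.sum_congr rfl
        intro j _
        have h2 : ∀ X : Matrix m m ℂ, (∑ i, (((U i)ᴴ * X).trace) • U i) = X →
            (g j)⁻¹ • (W j * Xᴴ) =
              ∑ i, ((g j)⁻¹ * (star (((U i)ᴴ * X).trace))) • (W j * (U i)ᴴ) := by
          intro X hX
          conv_lhs => rw [← hX]
          rw [Matrix.conjTranspose_sum, Matrix.mul_sum, Finset.smul_sum]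
          exact Finset.sum_congr rfl fun i _ => by
            rw [Matrix.conjTranspose_smul, Matrix.mul_smul, smul_smul]
        rw [h2 (W j) (expW j)]
        exact Finset.sum_congr rfl fun i _ => by rw [star_trace_pair]

end ONBAux

section StdAux
variable {n : Type*} [Fintype n] [DecidableEq n]

lemma stdBasis_conjT (a b : n) :
    (Matrix.single a b (1:ℂ))ᴴ = Matrix.single b a 1 := by
  ext i j
  simp only [conjTranspose_apply, Matrix.single, of_apply]
  rw [apply_ite (star : ℂ → ℂ)]
  simp [and_comm]

lemma trace_stdBasis (a b : n) :
    (Matrix.single a b (1:ℂ)).trace = if a = b then 1 else 0 := by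
  by_cases h : a = b
  · subst h
    rw [if_pos rfl, Matrix.trace]
    rw [Matrix.diag_single_same]
    simp
  · rw [if_neg h, Matrix.trace, Matrix.diag_single_of_ne _ _ _ h]
    simp

lemma sum_stdBasis_diag : ∑ a : n, Matrix.single a a (1:ℂ) = 1 := by
  ext i j
  rw [Matrix.sum_apply]
  by_cases h : i = j
  · subst h
    rw [Matrix.one_apply_eq]
    rw [Finset.sum_eq_single i]
    · simp
    · intro b _ hb; simp [hb]
    · simp
  · rw [Matrix.one_apply_ne h]
    apply Finset.sum_eq_zero
    intro a _
    by_cases h1 : a = i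
    · subst h1; simp [h]
    · simp [h1]

end StdAux

/-- Decomposition of a block family into scaled matrix units. -/
lemma pi_matrix_decomp {k : ℕ} (nl : Fin k → ℕ)
    (A : ∀ l, Matrix (Fin (nl l)) (Fin (nl l)) ℂ) :
    A = ∑ j : (l : Fin k) × (Fin (nl l) × Fin (nl l)),
      A j.1 j.2.1 j.2.2 • (Pi.single j.1 (Matrix.single j.2.1 j.2.2 (1:ℂ)) :
        ∀ l, Matrix (Fin (nl l)) (Fin (nl l)) ℂ) := by
  funext l
  rw [Finset.sum_apply, ← Finset.univ_sigma_univ, Finset.sum_sigma]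
  rw [Finset.sum_eq_single l]
  · rw [Fintype.sum_prod_type]
    conv_lhs => rw [matrix_eq_sum_single (A l)]
    apply Finset.sum_congr rfl; intro a _
    apply Finset.sum_congr rfl; intro b _
    rw [Pi.smul_apply, Pi.single_eq_same, Matrix.smul_single, smul_eq_mul, mul_one]
  · intro c _ hc
    apply Finset.sum_eq_zero
    rintro ⟨a, b⟩ _
    rw [Pi.smul_apply, Pi.single_eq_of_ne (Ne.symm hc), smul_zero]
  · simp

section Main
variable {k : ℕ} (nl ml : Fin k → ℕ)
  (V : Matrix ((l : Fin k) × (Fin (nl l) × Fin (ml l)))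
      ((l : Fin k) × (Fin (nl l) × Fin (ml l))) ℂ)

/-- The standard (unnormalized) basis of the algebra. -/
noncomputable def famW (j : (l : Fin k) × (Fin (nl l) × Fin (nl l))) :
    Matrix ((l : Fin k) × (Fin (nl l) × Fin (ml l)))
      ((l : Fin k) × (Fin (nl l) × Fin (ml l))) ℂ :=
  V * blockEmbed nl ml
    (Pi.single j.1 (Matrix.single j.2.1 j.2.2 (1:ℂ))) * Vᴴ

lemma conjV_mul (hV1 : Vᴴ * V = 1)
    (X Y : Matrix ((l : Fin k) × (Fin (nl l) × Fin (ml l)))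
      ((l : Fin k) × (Fin (nl l) × Fin (ml l))) ℂ) :
    (V * X * Vᴴ) * (V * Y * Vᴴ) = V * (X * Y) * Vᴴ := by
  rw [show (V * X * Vᴴ) * (V * Y * Vᴴ) = V * (X * ((Vᴴ * V) * (Y * Vᴴ))) by noncomm_ring,
    hV1, one_mul]
  noncomm_ring

lemma conjV_conjT
    (X : Matrix ((l : Fin k) × (Fin (nl l) × Fin (ml l)))
      ((l : Fin k) × (Fin (nl l) × Fin (ml l))) ℂ) :
    (V * X * Vᴴ)ᴴ = V * Xᴴ * Vᴴ := by
  rw [Matrix.conjTranspose_mul, Matrix.conjTranspose_mul, Matrix.conjTranspose_conjTranspose]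
  noncomm_ring

lemma conjV_trace (hV1 : Vᴴ * V = 1)
    (X : Matrix ((l : Fin k) × (Fin (nl l) × Fin (ml l)))
      ((l : Fin k) × (Fin (nl l) × Fin (ml l))) ℂ) :
    (V * X * Vᴴ).trace = X.trace := by
  rw [Matrix.trace_mul_comm, ← Matrix.mul_assoc, hV1, one_mul]

lemma famW_pair (hV1 : Vᴴ * V = 1) (p q : (l : Fin k) × (Fin (nl l) × Fin (nl l))) :
    ((famW nl ml V p)ᴴ * famW nl ml V q).trace
      = ∑ l, (ml l : ℂ) *
        (((Pi.single p.1 (Matrix.single p.2.1 p.2.2 (1:ℂ)) :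
            ∀ l, Matrix (Fin (nl l)) (Fin (nl l)) ℂ) l)ᴴ *
          ((Pi.single q.1 (Matrix.single q.2.1 q.2.2 (1:ℂ)) :
            ∀ l, Matrix (Fin (nl l)) (Fin (nl l)) ℂ) l)).trace := by
  rw [famW, famW, conjV_conjT, conjV_mul nl ml V hV1, conjV_trace nl ml V hV1,
    bE_conjT, bE_mul, bE_trace]

lemma famW_orth (hV1 : Vᴴ * V = 1) (p q : (l : Fin k) × (Fin (nl l) × Fin (nl l))) :
    ((famW nl ml V p)ᴴ * famW nl ml V q).trace
      = if p = q then (ml p.1 : ℂ) else 0 := by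
  rw [famW_pair nl ml V hV1]
  obtain ⟨pl, pa, pb⟩ := p
  obtain ⟨ql, qa, qb⟩ := q
  dsimp only
  by_cases h : pl = ql
  · subst h
    rw [Finset.sum_eq_single pl]
    · rw [Pi.single_eq_same, Pi.single_eq_same, stdBasis_conjT]
      by_cases h2 : pa = qa
      · subst h2
        rw [Matrix.single_mul_single_same, one_mul, trace_stdBasis]
        by_cases h3 : pb = qb
        · subst h3; simp
        · simp [h3, Sigma.ext_iff, Prod.ext_iff]
      · rw [Matrix.single_mul_single_of_ne (h := h2)]
        rw [Matrix.trace_zero, mul_zero]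
        rw [if_neg (by simp [Sigma.ext_iff, Prod.ext_iff, h2])]
    · intro l _ hl
      rw [Pi.single_eq_of_ne hl]
      simp
    · simp
  · rw [if_neg (by simp [Sigma.ext_iff, h])]
    apply Finset.sum_eq_zero; intro l _
    by_cases h1 : l = pl
    · subst h1
      rw [Pi.single_eq_of_ne (fun hh : l = ql => h hh)]
      simp
    · rw [Pi.single_eq_of_ne h1]
      simp

lemma famW_sq (hV1 : Vᴴ * V = 1) (j : (l : Fin k) × (Fin (nl l) × Fin (nl l))) :
    famW nl ml V j * (famW nl ml V j)ᴴ
      = V * blockEmbed nl ml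
          (Pi.single j.1 (Matrix.single j.2.1 j.2.1 (1:ℂ))) * Vᴴ := by
  have hfam : (fun l => (Pi.single j.1 (Matrix.single j.2.1 j.2.2 (1:ℂ)) :
      ∀ l, Matrix (Fin (nl l)) (Fin (nl l)) ℂ) l *
      ((Pi.single j.1 (Matrix.single j.2.1 j.2.2 (1:ℂ)) :
      ∀ l, Matrix (Fin (nl l)) (Fin (nl l)) ℂ) l)ᴴ)
      = (Pi.single j.1 (Matrix.single j.2.1 j.2.1 (1:ℂ)) :
        ∀ l, Matrix (Fin (nl l)) (Fin (nl l)) ℂ) := by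
    funext l
    by_cases h1 : l = j.1
    · subst h1
      rw [Pi.single_eq_same, Pi.single_eq_same, stdBasis_conjT,
        Matrix.single_mul_single_same, one_mul]
    · rw [Pi.single_eq_of_ne h1, Pi.single_eq_of_ne h1]
      simp
  rw [famW, conjV_conjT, conjV_mul nl ml V hV1, bE_conjT, bE_mul, hfam]

end Main

/-- Let 𝒜 ⊂ M_n(ℂ) be unitarily equivalent to ⊕_l M_{n_l} ⊗ I_{m_l} with all
ratios n_l/m_l equal, and {U_i}_{i=1}^{dim 𝒜} a Hilbert–Schmidt orthonormal basis
of 𝒜. Then X ↦ (n / dim 𝒜) ∑_i U_i* X U_i is the trace-preserving conditional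
expectation from M_n(ℂ) onto the commutant 𝒜′. -/
theorem condExp_onto_commutant (k : ℕ) (nl ml : Fin k → ℕ)
    (V : Matrix ((l : Fin k) × (Fin (nl l) × Fin (ml l)))
      ((l : Fin k) × (Fin (nl l) × Fin (ml l))) ℂ)
    (hV : Vᴴ * V = 1 ∧ V * Vᴴ = 1)
    (𝒜 : Set (Matrix ((l : Fin k) × (Fin (nl l) × Fin (ml l)))
      ((l : Fin k) × (Fin (nl l) × Fin (ml l))) ℂ))
    (h𝒜 : 𝒜 = {X | ∃ A, X = V * blockEmbed nl ml A * Vᴴ})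
    (hratio : ∀ l l', nl l * ml l' = nl l' * ml l)
    (N : ℕ) (hN : N = ∑ l, (nl l) ^ 2)
    (U : Fin N → Matrix ((l : Fin k) × (Fin (nl l) × Fin (ml l)))
      ((l : Fin k) × (Fin (nl l) × Fin (ml l))) ℂ)
    (hmem : ∀ i, U i ∈ 𝒜)
    (horth : ∀ i j, ((U i)ᴴ * U j).trace = if i = j then (1 : ℂ) else 0)
    (hspan : Submodule.span ℂ (Set.range U) = Submodule.span ℂ 𝒜)
    (E : Matrix ((l : Fin k) × (Fin (nl l) × Fin (ml l)))
        ((l : Fin k) × (Fin (nl l) × Fin (ml l))) ℂ →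
      Matrix ((l : Fin k) × (Fin (nl l) × Fin (ml l)))
        ((l : Fin k) × (Fin (nl l) × Fin (ml l))) ℂ)
    (hE : ∀ X, E X = ((Fintype.card ((l : Fin k) × (Fin (nl l) × Fin (ml l))) : ℂ) / (N : ℂ))
      • ∑ i, (U i)ᴴ * X * U i) :
    IsCondExp (matCommutant 𝒜) E ∧ ∀ X, (E X).trace = X.trace := by
  obtain ⟨hV1, hV2⟩ := hV
  by_cases hne : Nonempty ((l : Fin k) × (Fin (nl l) × Fin (ml l)))
  case neg =>
    have hie : IsEmpty ((l : Fin k) × (Fin (nl l) × Fin (ml l))) := not_nonempty_iff.mp hne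
    have htr0 : ∀ X : Matrix ((l : Fin k) × (Fin (nl l) × Fin (ml l)))
        ((l : Fin k) × (Fin (nl l) × Fin (ml l))) ℂ, X.trace = 0 := by
      intro X
      rw [Matrix.trace, Finset.univ_eq_empty, Finset.sum_empty]
    refine ⟨⟨fun X A hA => ?_, fun X A hA => htr0 _⟩, fun X => by rw [htr0, htr0]⟩
    ext p q
    exact hie.elim p
  case pos =>
    obtain ⟨p0⟩ := hne
    -- basic positivity facts
    have hn0 : 0 < nl p0.1 := p0.2.1.pos
    have hm0 : 0 < ml p0.1 := p0.2.2.pos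
    have hpos : ∀ l, 0 < nl l → 0 < ml l := by
      intro l hl
      have h1 : 0 < nl l * ml p0.1 := Nat.mul_pos hl hm0
      rw [← hratio p0.1 l] at h1
      exact Nat.pos_of_ne_zero (fun h0 => by simp [h0] at h1)
    have hNpos : 0 < N := by
      rw [hN]
      exact Finset.sum_pos' (fun _ _ => Nat.zero_le _)
        ⟨p0.1, Finset.mem_univ _, pow_pos hn0 2⟩
    have hcard : 0 < Fintype.card ((l : Fin k) × (Fin (nl l) × Fin (ml l))) :=
      @Fintype.card_pos _ _ ⟨p0⟩
    have hNC : (N : ℂ) ≠ 0 := Nat.cast_ne_zero.mpr hNpos.ne'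
    have hcC : ((Fintype.card ((l : Fin k) × (Fin (nl l) × Fin (ml l))) : ℕ) : ℂ) ≠ 0 :=
      Nat.cast_ne_zero.mpr hcard.ne'
    have hcardsum : Fintype.card ((l : Fin k) × (Fin (nl l) × Fin (ml l)))
        = ∑ l, nl l * ml l := by
      rw [Fintype.card_sigma]
      exact Finset.sum_congr rfl fun l _ => by rw [Fintype.card_prod, Fintype.card_fin,
        Fintype.card_fin]
    have hkey : ∀ l, nl l * Fintype.card ((l : Fin k) × (Fin (nl l) × Fin (ml l)))
        = N * ml l := by
      intro l
      rw [hcardsum, hN, Finset.mul_sum, Finset.sum_mul]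
      apply Finset.sum_congr rfl
      intro l' _
      rw [show nl l * (nl l' * ml l') = nl l' * (nl l * ml l') by ring, hratio l l']
      ring
    -- algebra closure properties
    have hmulA : ∀ A B, A ∈ 𝒜 → B ∈ 𝒜 → A * B ∈ 𝒜 := by
      intro A B hA hB
      rw [h𝒜] at *
      obtain ⟨A', rfl⟩ := hA
      obtain ⟨B', rfl⟩ := hB
      exact ⟨_, by rw [conjV_mul nl ml V hV1, bE_mul]⟩
    have hstarA : ∀ A, A ∈ 𝒜 → Aᴴ ∈ 𝒜 := by
      intro A hA
      rw [h𝒜] at *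
      obtain ⟨A', rfl⟩ := hA
      exact ⟨_, by rw [conjV_conjT, bE_conjT]⟩
    have hsub : ∀ B, B ∈ 𝒜 → B ∈ Submodule.span ℂ (Set.range U) := by
      intro B hB
      rw [hspan]
      exact Submodule.subset_span hB
    have hexp : ∀ B, B ∈ 𝒜 → ∑ i, (((U i)ᴴ * B).trace) • U i = B := fun B hB =>
      expandONB' U horth B (hsub B hB)
    -- the W family facts
    have hWmem : ∀ j, famW nl ml V j ∈ 𝒜 := by
      intro j
      rw [h𝒜]
      exact ⟨_, rfl⟩
    have hWU : ∀ j, famW nl ml V j ∈ Submodule.span ℂ (Set.range U) := fun j =>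
      hsub _ (hWmem j)
    have hUW : ∀ i, U i ∈ Submodule.span ℂ (Set.range (famW nl ml V)) := by
      intro i
      have hAsub : ∀ B, B ∈ 𝒜 → B ∈ Submodule.span ℂ (Set.range (famW nl ml V)) := by
        intro B hB
        rw [h𝒜] at hB
        obtain ⟨A', rfl⟩ := hB
        have hdec := pi_matrix_decomp nl A'
        rw [show blockEmbed nl ml A' = bEL nl ml A' from rfl, hdec, map_sum]
        rw [Matrix.mul_sum, Matrix.sum_mul]
        apply Submodule.sum_mem
        intro j _
        rw [_root_.map_smul, Matrix.mul_smul, Matrix.smul_mul]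
        exact Submodule.smul_mem _ _ (Submodule.subset_span ⟨j, rfl⟩)
      exact hAsub _ (hmem i)
    have hg : ∀ j : (l : Fin k) × (Fin (nl l) × Fin (nl l)), (ml j.1 : ℂ) ≠ 0 :=
      fun j => Nat.cast_ne_zero.mpr (hpos j.1 j.2.1.pos).ne'
    -- the key sum identity
    have hSum : ∑ i, U i * (U i)ᴴ
        = ((N : ℂ) / (Fintype.card ((l : Fin k) × (Fin (nl l) × Fin (ml l))) : ℂ)) • 1 := by
      rw [sumONB U (famW nl ml V) (fun j => (ml j.1 : ℂ)) hg horth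
        (famW_orth nl ml V hV1) hUW hWU]
      have h1 : ∀ j : (l : Fin k) × (Fin (nl l) × Fin (nl l)),
          ((ml j.1 : ℂ))⁻¹ • (famW nl ml V j * (famW nl ml V j)ᴴ)
          = V * ((bEL nl ml) ((ml j.1 : ℂ)⁻¹ •
              (Pi.single j.1 (Matrix.single j.2.1 j.2.1 (1:ℂ)) :
                ∀ l, Matrix (Fin (nl l)) (Fin (nl l)) ℂ))) * Vᴴ := by
        intro j
        rw [_root_.map_smul, famW_sq nl ml V hV1 j, Matrix.mul_smul, Matrix.smul_mul]
        rfl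
      simp_rw [h1]
      rw [← Matrix.sum_mul, ← Matrix.mul_sum, ← map_sum]
      have h2 : (∑ j : (l : Fin k) × (Fin (nl l) × Fin (nl l)),
          (ml j.1 : ℂ)⁻¹ • (Pi.single j.1 (Matrix.single j.2.1 j.2.1 (1:ℂ)) :
            ∀ l, Matrix (Fin (nl l)) (Fin (nl l)) ℂ))
          = fun l => ((nl l : ℂ) * (ml l : ℂ)⁻¹) • (1 : Matrix (Fin (nl l)) (Fin (nl l)) ℂ) := by
        funext l
        rw [Finset.sum_apply, ← Finset.univ_sigma_univ, Finset.sum_sigma]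
        rw [Finset.sum_eq_single l]
        · rw [Fintype.sum_prod_type]
          dsimp only
          simp only [Pi.smul_apply, Pi.single_eq_same]
          have hb : ∀ a : Fin (nl l), (∑ _b : Fin (nl l),
              (ml l : ℂ)⁻¹ • Matrix.single a a (1:ℂ))
              = (nl l : ℂ) • ((ml l : ℂ)⁻¹ • Matrix.single a a (1:ℂ)) := by
            intro a
            rw [Finset.sum_const, Finset.card_univ, Fintype.card_fin,
              ← Nat.cast_smul_eq_nsmul ℂ]
          simp_rw [hb]
          rw [← Finset.smul_sum, ← Finset.smul_sum, sum_stdBasis_diag, smul_smul]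
        · intro c _ hc
          apply Finset.sum_eq_zero
          rintro ⟨a, b⟩ _
          rw [Pi.smul_apply, Pi.single_eq_of_ne (Ne.symm hc), smul_zero]
        · simp
      rw [h2]
      have hcongr : ∀ l, 0 < nl l → 0 < ml l →
          ((nl l : ℂ) * (ml l : ℂ)⁻¹) • (1 : Matrix (Fin (nl l)) (Fin (nl l)) ℂ)
          = ((N : ℂ) / (Fintype.card ((l : Fin k) × (Fin (nl l) × Fin (ml l))) : ℂ)) • 1 := by
        intro l hl1 hl2
        congr 1
        have hml : (ml l : ℂ) ≠ 0 := Nat.cast_ne_zero.mpr hl2.ne'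
        have hcast : (nl l : ℂ) * (Fintype.card ((l : Fin k) × (Fin (nl l) × Fin (ml l))) : ℂ)
            = (N : ℂ) * (ml l : ℂ) := by exact_mod_cast congrArg (Nat.cast : ℕ → ℂ) (hkey l)
        rw [show (nl l : ℂ) * (ml l : ℂ)⁻¹ = (nl l : ℂ) / (ml l : ℂ) from
          (div_eq_mul_inv _ _).symm, div_eq_div_iff hml hcC]
        exact hcast
      rw [show (bEL nl ml) (fun l => ((nl l : ℂ) * (ml l : ℂ)⁻¹) •
          (1 : Matrix (Fin (nl l)) (Fin (nl l)) ℂ))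
        = blockEmbed nl ml (fun l => ((nl l : ℂ) * (ml l : ℂ)⁻¹) • 1) from rfl]
      rw [bE_congr nl ml _ (fun l =>
        ((N : ℂ) / (Fintype.card ((l : Fin k) × (Fin (nl l) × Fin (ml l))) : ℂ)) • 1) hcongr]
      rw [show (fun l => ((N : ℂ) / (Fintype.card ((l : Fin k) × (Fin (nl l) × Fin (ml l))) : ℂ))
          • (1 : Matrix (Fin (nl l)) (Fin (nl l)) ℂ))
        = ((N : ℂ) / (Fintype.card ((l : Fin k) × (Fin (nl l) × Fin (ml l))) : ℂ))
          • (fun l => (1 : Matrix (Fin (nl l)) (Fin (nl l)) ℂ)) from rfl]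
      rw [bE_smul, bE_one, Matrix.mul_smul, Matrix.mul_one, Matrix.smul_mul, hV2]
    -- part 2: orthogonality
    have part2 : ∀ X, ∀ A ∈ matCommutant 𝒜, (Aᴴ * (X - E X)).trace = 0 := by
      intro X A hA
      have hAc : ∀ B ∈ 𝒜, B * Aᴴ = Aᴴ * B := by
        intro B hB
        have h5 := hA Bᴴ (hstarA B hB)
        have h6 := congrArg Matrix.conjTranspose h5
        rw [Matrix.conjTranspose_mul, Matrix.conjTranspose_mul,
          Matrix.conjTranspose_conjTranspose] at h6
        exact h6.symm
      have hterm : ∀ i, (Aᴴ * ((U i)ᴴ * X * U i)).trace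
          = (Aᴴ * ((U i * (U i)ᴴ) * X)).trace := by
        intro i
        rw [show Aᴴ * ((U i)ᴴ * X * U i) = (Aᴴ * (U i)ᴴ * X) * U i by noncomm_ring]
        rw [Matrix.trace_mul_comm]
        rw [show U i * (Aᴴ * (U i)ᴴ * X) = (U i * Aᴴ) * ((U i)ᴴ * X) by noncomm_ring]
        rw [hAc (U i) (hmem i)]
        rw [show (Aᴴ * U i) * ((U i)ᴴ * X) = Aᴴ * ((U i * (U i)ᴴ) * X) by noncomm_ring]
      have htr : (Aᴴ * E X).trace = (Aᴴ * X).trace := by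
        rw [hE X, Matrix.mul_smul, Matrix.trace_smul, smul_eq_mul]
        rw [Matrix.mul_sum, Matrix.trace_sum]
        simp_rw [hterm]
        rw [← Matrix.trace_sum, ← Matrix.mul_sum, ← Finset.sum_mul, hSum, Matrix.smul_mul,
          one_mul, Matrix.mul_smul, Matrix.trace_smul, smul_eq_mul]
        rw [← mul_assoc, div_mul_div_comm, mul_comm ((Fintype.card
          ((l : Fin k) × (Fin (nl l) × Fin (ml l))) : ℂ)) ((N:ℂ)), div_self
          (mul_ne_zero hNC hcC), one_mul]
      rw [Matrix.mul_sub, Matrix.trace_sub, htr, sub_self]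
    refine ⟨⟨?_, part2⟩, fun X => ?_⟩
    · -- part 1: membership in the commutant
      intro X A hA
      rw [hE X, Matrix.mul_smul, Matrix.smul_mul]
      congr 1
      have key1 : (∑ i, (U i)ᴴ * X * U i) * A
          = ∑ i, ∑ j, (((U j)ᴴ * (U i * A)).trace) • ((U i)ᴴ * X * U j) := by
        rw [Finset.sum_mul]
        apply Finset.sum_congr rfl; intro i _
        rw [show ((U i)ᴴ * X * U i) * A = ((U i)ᴴ * X) * (U i * A) by noncomm_ring]
        conv_lhs => rw [← hexp (U i * A) (hmulA _ _ (hmem i) hA)]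
        rw [Matrix.mul_sum]
        apply Finset.sum_congr rfl; intro j _
        rw [Matrix.mul_smul]
      have key2 : A * (∑ i, (U i)ᴴ * X * U i)
          = ∑ i, ∑ j, (((U j)ᴴ * (U i * A)).trace) • ((U i)ᴴ * X * U j) := by
        rw [Matrix.mul_sum]
        have hstep : ∀ i, A * ((U i)ᴴ * X * U i)
            = ∑ j, star (((U j)ᴴ * (U i * Aᴴ)).trace) • ((U j)ᴴ * X * U i) := by
          intro i
          have h4 : A * (U i)ᴴ = (∑ j, (((U j)ᴴ * (U i * Aᴴ)).trace) • U j)ᴴ := by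
            rw [hexp _ (hmulA _ _ (hmem i) (hstarA _ hA)), Matrix.conjTranspose_mul,
              Matrix.conjTranspose_conjTranspose]
          rw [show A * ((U i)ᴴ * X * U i) = (A * (U i)ᴴ) * (X * U i) by noncomm_ring, h4,
            Matrix.conjTranspose_sum, Finset.sum_mul]
          apply Finset.sum_congr rfl; intro j _
          rw [Matrix.conjTranspose_smul, Matrix.smul_mul]
          congr 1
          noncomm_ring
        simp_rw [hstep]
        rw [Finset.sum_comm]
        apply Finset.sum_congr rfl; intro x _
        apply Finset.sum_congr rfl; intro y _
        congr 1
        rw [star_trace_pair, Matrix.conjTranspose_mul, Matrix.conjTranspose_conjTranspose]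
        rw [show (A * (U y)ᴴ) * U x = A * ((U y)ᴴ * U x) by noncomm_ring,
          Matrix.trace_mul_comm,
          show ((U y)ᴴ * U x) * A = (U y)ᴴ * (U x * A) by noncomm_ring]
      rw [key2, key1]
    · -- part 3: trace preservation from part 2 applied to A = 1
      have hone : (1 : Matrix ((l : Fin k) × (Fin (nl l) × Fin (ml l)))
          ((l : Fin k) × (Fin (nl l) × Fin (ml l))) ℂ) ∈ matCommutant 𝒜 :=
        fun B _ => by rw [mul_one, one_mul]
      have := part2 X 1 hone
      rw [Matrix.conjTranspose_one, one_mul, Matrix.trace_sub, sub_eq_zero] at this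
      exact this.symm
end

section
/- Let 𝒜_1, 𝒜_2 be complementary subalgebras of M_n(ℂ) whose products span M_n. If {U_i} is an orthonormal basis of 𝒜_1, then E(X) = (n / dim 𝒜_1) Σ_i U_i* X U_i is the trace-preserving conditional expectation of M_n onto 𝒜_1′, and (dim 𝒜_1)(dim 𝒜_2) = n². -/
open Matrix BigOperators

/-- Complementarity (quasi-orthogonality) of two sets of matrices. -/
def Complementary {ι : Type*} [Fintype ι] [DecidableEq ι]
    (S T : Set (Matrix ι ι ℂ)) : Prop :=
  ∀ A ∈ S, ∀ B ∈ T, (Aᴴ * B).trace = Aᴴ.trace * B.trace / (Fintype.card ι : ℂ)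

/-! ### Auxiliary lemmas -/

/-- A matrix whose Hilbert–Schmidt norm vanishes is zero. -/
private lemma aux_eq_zero_of_trace_star_self {n : ℕ} (M : Matrix (Fin n) (Fin n) ℂ)
    (h : (Mᴴ * M).trace = 0) : M = 0 := by
  have h' : ∑ j, ∑ i, Complex.normSq (M i j) = 0 := by
    have := congrArg Complex.re h
    simpa [Matrix.trace, Matrix.diag, Matrix.mul_apply, Matrix.conjTranspose_apply,
      Complex.re_sum, Complex.normSq_apply, Complex.mul_re, Complex.conj_re, Complex.conj_im,
      mul_comm] using this
  ext i j
  have hnn : ∀ j' ∈ Finset.univ, (0:ℝ) ≤ ∑ i, Complex.normSq (M i j') := fun j' _ =>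
    Finset.sum_nonneg fun i _ => Complex.normSq_nonneg _
  have h1 : ∑ i, Complex.normSq (M i j) = 0 :=
    (Finset.sum_eq_zero_iff_of_nonneg hnn).1 h' j (Finset.mem_univ j)
  have h2 : Complex.normSq (M i j) = 0 :=
    (Finset.sum_eq_zero_iff_of_nonneg (fun i _ => Complex.normSq_nonneg _)).1 h1 i
      (Finset.mem_univ i)
  simpa using Complex.normSq_eq_zero.1 h2

/-- Reconstruction of an element of the span of an orthogonal family. -/
private lemma aux_recon {n : ℕ} {ι : Type*} [Fintype ι] [DecidableEq ι] (c : ℂ) (hc : c ≠ 0)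
    (V : ι → Matrix (Fin n) (Fin n) ℂ)
    (horth : ∀ i j, ((V i)ᴴ * V j).trace = if i = j then c else 0)
    {x : Matrix (Fin n) (Fin n) ℂ} (hx : x ∈ Submodule.span ℂ (Set.range V)) :
    x = c⁻¹ • ∑ j, ((V j)ᴴ * x).trace • V j := by
  induction hx using Submodule.span_induction with
  | mem y hy =>
    obtain ⟨i, rfl⟩ := hy
    simp only [horth, ite_smul, zero_smul, Finset.sum_ite_eq', Finset.mem_univ, if_true]
    rw [smul_smul, inv_mul_cancel₀ hc, one_smul]
  | zero => simp
  | add x y _ _ ihx ihy =>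
    simp only [Matrix.mul_add, Matrix.trace_add, add_smul, Finset.sum_add_distrib, smul_add]
    rw [← ihx, ← ihy]
  | smul a x _ ih =>
    simp only [Matrix.mul_smul, Matrix.trace_smul, smul_eq_mul, mul_smul,
      ← Finset.smul_sum]
    rw [smul_comm c⁻¹ a, ← ih]

private lemma aux_star_mem_span {n : ℕ} {S : Set (Matrix (Fin n) (Fin n) ℂ)}
    {x : Matrix (Fin n) (Fin n) ℂ} (hx : x ∈ Submodule.span ℂ S) :
    xᴴ ∈ Submodule.span ℂ (Matrix.conjTranspose '' S) := by
  induction hx using Submodule.span_induction with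
  | mem y hy => exact Submodule.subset_span ⟨y, hy, rfl⟩
  | zero => simp
  | add x y _ _ ihx ihy => rw [Matrix.conjTranspose_add]; exact add_mem ihx ihy
  | smul a x _ ih =>
    rw [Matrix.conjTranspose_smul]
    exact Submodule.smul_mem _ _ ih

private lemma aux_star_orth {n m : ℕ} (V : Fin m → Matrix (Fin n) (Fin n) ℂ)
    (horth : ∀ i j, ((V i)ᴴ * V j).trace = if i = j then (1:ℂ) else 0) :
    ∀ i j, (((fun k => (V k)ᴴ) i)ᴴ * (fun k => (V k)ᴴ) j).trace
      = if i = j then (1:ℂ) else 0 := by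
  intro i j
  simp only [conjTranspose_conjTranspose]
  rw [Matrix.trace_mul_comm, horth]
  by_cases h : i = j <;> simp [h, eq_comm]

private lemma aux_mem_span_star {n m : ℕ} (𝒜 : StarSubalgebra ℂ (Matrix (Fin n) (Fin n) ℂ))
    (V : Fin m → Matrix (Fin n) (Fin n) ℂ)
    (hVspan : Submodule.span ℂ (Set.range V)
      = Submodule.span ℂ (𝒜 : Set (Matrix (Fin n) (Fin n) ℂ)))
    {x : Matrix (Fin n) (Fin n) ℂ} (hx : x ∈ 𝒜) :
    x ∈ Submodule.span ℂ (Set.range fun k => (V k)ᴴ) := by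
  have h1 : xᴴ ∈ Submodule.span ℂ (Set.range V) := by
    rw [hVspan]; exact Submodule.subset_span (star_mem hx)
  have h2 := aux_star_mem_span h1
  rw [conjTranspose_conjTranspose] at h2
  rwa [← Set.range_comp] at h2

/-- The Kraus-type map built from an orthonormal basis of a subalgebra lands
in the commutant of the subalgebra. -/
private lemma aux_phi_comm {n m : ℕ} (𝒜 : StarSubalgebra ℂ (Matrix (Fin n) (Fin n) ℂ))
    (V : Fin m → Matrix (Fin n) (Fin n) ℂ)
    (hVmem : ∀ i, V i ∈ 𝒜)
    (horth : ∀ i j, ((V i)ᴴ * V j).trace = if i = j then (1:ℂ) else 0)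
    (hVspan : Submodule.span ℂ (Set.range V)
      = Submodule.span ℂ (𝒜 : Set (Matrix (Fin n) (Fin n) ℂ)))
    (X : Matrix (Fin n) (Fin n) ℂ) {A : Matrix (Fin n) (Fin n) ℂ} (hA : A ∈ 𝒜) :
    A * (∑ i, (V i)ᴴ * X * V i) = (∑ i, (V i)ᴴ * X * V i) * A := by
  have hsub : ∀ y ∈ 𝒜, y ∈ Submodule.span ℂ (Set.range V) := by
    intro y hy; rw [hVspan]; exact Submodule.subset_span hy
  have expand1 : ∀ i, V i * A = ∑ j, (((V j)ᴴ * (V i * A)).trace) • V j := by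
    intro i
    have h := aux_recon 1 one_ne_zero V horth (hsub _ (mul_mem (hVmem i) hA))
    simpa using h
  have expand2 : ∀ j, A * (V j)ᴴ = ∑ i, (((V j)ᴴ * (V i * A)).trace) • (V i)ᴴ := by
    intro j
    have h := aux_recon 1 one_ne_zero (fun k => (V k)ᴴ) (aux_star_orth V horth)
      (x := A * (V j)ᴴ)
      (aux_mem_span_star 𝒜 V hVspan (mul_mem hA (star_mem (hVmem j))))
    simp only [conjTranspose_conjTranspose, inv_one, one_smul] at h
    rw [h]
    refine Finset.sum_congr rfl fun i _ => ?_
    congr 1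
    rw [← Matrix.mul_assoc, Matrix.trace_mul_comm]
  calc A * (∑ i, (V i)ᴴ * X * V i)
      = ∑ j, (A * (V j)ᴴ) * (X * V j) := by
        rw [Finset.mul_sum]
        exact Finset.sum_congr rfl fun j _ => by simp only [Matrix.mul_assoc]
    _ = ∑ j, ∑ i, (((V j)ᴴ * (V i * A)).trace) • ((V i)ᴴ * (X * V j)) := by
        refine Finset.sum_congr rfl fun j _ => ?_
        rw [expand2 j, Finset.sum_mul]
        exact Finset.sum_congr rfl fun i _ => by rw [Matrix.smul_mul]
    _ = ∑ i, ∑ j, (((V j)ᴴ * (V i * A)).trace) • ((V i)ᴴ * (X * V j)) := Finset.sum_comm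
    _ = (∑ i, (V i)ᴴ * X * V i) * A := by
        rw [Finset.sum_mul]
        refine Finset.sum_congr rfl fun i _ => ?_
        conv_rhs => rw [Matrix.mul_assoc ((V i)ᴴ * X) (V i) A, expand1 i, Finset.mul_sum]
        exact Finset.sum_congr rfl fun j _ => by
          rw [Matrix.mul_smul, Matrix.mul_assoc]

/-- An orthogonal spanning family of `M_n(ℂ)` has `n ^ 2` elements. -/
private lemma aux_card_eq_sq {n : ℕ} {ι : Type*} [Fintype ι] [DecidableEq ι]
    (c : ℂ) (hc : c ≠ 0) (Q : ι → Matrix (Fin n) (Fin n) ℂ)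
    (horth : ∀ i j, ((Q i)ᴴ * Q j).trace = if i = j then c else 0)
    (hspan : Submodule.span ℂ (Set.range Q) = ⊤) : Fintype.card ι = n ^ 2 := by
  have hli : LinearIndependent ℂ Q := by
    rw [Fintype.linearIndependent_iff]
    intro g hg k
    have h0 : ((Q k)ᴴ * (∑ i, g i • Q i)).trace = 0 := by rw [hg]; simp
    rw [Finset.mul_sum] at h0
    simp only [Matrix.mul_smul, Matrix.trace_sum, Matrix.trace_smul, horth, smul_eq_mul,
      mul_ite, mul_one, mul_zero, Finset.sum_ite_eq, Finset.sum_ite_eq',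
      Finset.mem_univ, if_true] at h0
    exact (mul_eq_zero.1 h0).resolve_right hc
  have hb := Module.Basis.mk hli (by rw [hspan])
  have h1 := Module.finrank_eq_card_basis hb
  rw [Module.finrank_matrix] at h1
  simpa [sq, Fintype.card_fin] using h1.symm

/-- Completeness relation for an orthogonal basis of `M_n(ℂ)`. -/
private lemma aux_completeness {n : ℕ} {ι : Type*} [Fintype ι] [DecidableEq ι]
    (c : ℂ) (hc : c ≠ 0) (Q : ι → Matrix (Fin n) (Fin n) ℂ)
    (horth : ∀ i j, ((Q i)ᴴ * Q j).trace = if i = j then c else 0)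
    (hspan : Submodule.span ℂ (Set.range Q) = ⊤) (X : Matrix (Fin n) (Fin n) ℂ) :
    ∑ k, (Q k)ᴴ * X * Q k = (c * X.trace) • 1 := by
  have key : ∀ p q a b, ∑ k, star (Q k p q) * Q k a b
      = c * (if p = a ∧ q = b then 1 else 0) := by
    intro p q a b
    have h := aux_recon c hc Q horth (x := Matrix.single p q (1:ℂ))
      (by rw [hspan]; trivial)
    have hco : ∀ k, ((Q k)ᴴ * Matrix.single p q (1:ℂ)).trace
        = star (Q k p q) := by
      intro k
      simp [Matrix.trace, Matrix.diag, Matrix.mul_apply, Matrix.single,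
        Matrix.conjTranspose_apply, Finset.sum_comm (γ := Fin n), ite_and]
    simp only [hco] at h
    have h2 := congrFun (congrFun (congrArg (fun M : Matrix (Fin n) (Fin n) ℂ => M) h) a) b
    simp only [Matrix.smul_apply, Matrix.sum_apply, Matrix.single, Matrix.of_apply,
      smul_eq_mul] at h2
    rw [eq_comm, inv_mul_eq_iff_eq_mul₀ hc] at h2
    rw [← h2]
  ext a b
  have expand : ∀ k, ((Q k)ᴴ * X * Q k) a b
      = ∑ q, ∑ p, star (Q k p a) * X p q * Q k q b := by
    intro k
    simp only [Matrix.mul_apply, Matrix.conjTranspose_apply, Finset.sum_mul]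
  have h3 : (∑ k, (Q k)ᴴ * X * Q k) a b
      = ∑ q, ∑ p, (∑ k, star (Q k p a) * Q k q b) * X p q := by
    rw [Matrix.sum_apply]
    simp only [expand]
    rw [Finset.sum_comm]
    refine Finset.sum_congr rfl fun q _ => ?_
    rw [Finset.sum_comm]
    refine Finset.sum_congr rfl fun p _ => ?_
    rw [Finset.sum_mul]
    exact Finset.sum_congr rfl fun k _ => by ring
  rw [h3]
  simp only [key]
  by_cases hab : a = b
  · subst hab
    simp only [and_true, mul_ite, mul_one, mul_zero, ite_mul, zero_mul,
      Finset.sum_ite_eq', Finset.mem_univ, if_true]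
    simp [Matrix.smul_apply, Matrix.one_apply_eq, Matrix.trace, Matrix.diag,
      Finset.mul_sum, mul_comm]
  · simp [hab, Matrix.one_apply_ne hab]

/-- The key structural fact: for complementary subalgebras with spanning products,
`∑ᵢ Vᵢᴴ Vᵢ = (m₁ / n) • 1` for any orthonormal basis `V` of `𝒜₁`, and
`m₁ m₂ = n²`. -/
private lemma aux_T_scalar {n : ℕ} (hn : 0 < n)
    (𝒜₁ 𝒜₂ : StarSubalgebra ℂ (Matrix (Fin n) (Fin n) ℂ))
    (hc : Complementary (𝒜₁ : Set (Matrix (Fin n) (Fin n) ℂ))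
      (𝒜₂ : Set (Matrix (Fin n) (Fin n) ℂ)))
    (hspanM : Submodule.span ℂ
      {X : Matrix (Fin n) (Fin n) ℂ | ∃ A ∈ 𝒜₁, ∃ B ∈ 𝒜₂, X = A * B} = ⊤)
    {m₁ m₂ : ℕ}
    (V : Fin m₁ → Matrix (Fin n) (Fin n) ℂ) (hVmem : ∀ i, V i ∈ 𝒜₁)
    (hVorth : ∀ i j, ((V i)ᴴ * V j).trace = if i = j then (1:ℂ) else 0)
    (hVspan : Submodule.span ℂ (Set.range V)
      = Submodule.span ℂ (𝒜₁ : Set (Matrix (Fin n) (Fin n) ℂ)))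
    (W : Fin m₂ → Matrix (Fin n) (Fin n) ℂ) (hWmem : ∀ i, W i ∈ 𝒜₂)
    (hWorth : ∀ i j, ((W i)ᴴ * W j).trace = if i = j then (1:ℂ) else 0)
    (hWspan : Submodule.span ℂ (Set.range W)
      = Submodule.span ℂ (𝒜₂ : Set (Matrix (Fin n) (Fin n) ℂ))) :
    (∑ i, (V i)ᴴ * V i) = ((m₁ : ℂ) / (n : ℂ)) • 1 ∧ m₁ * m₂ = n ^ 2 := by
  have hn' : (n : ℂ) ≠ 0 := Nat.cast_ne_zero.2 hn.ne'
  set Q : Fin m₁ × Fin m₂ → Matrix (Fin n) (Fin n) ℂ := fun p => V p.1 * W p.2 with hQdef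
  have hQorth : ∀ p r, ((Q p)ᴴ * Q r).trace = if p = r then ((n:ℂ)⁻¹) else 0 := by
    rintro ⟨i, j⟩ ⟨k, l⟩
    have h1 : ((V i * W j)ᴴ * (V k * W l)).trace
        = ((V i)ᴴ * V k * (W l * (W j)ᴴ)).trace := by
      rw [conjTranspose_mul, Matrix.mul_assoc, Matrix.trace_mul_comm]
      simp only [Matrix.mul_assoc]
    have h2 := hc _ (mul_mem (star_mem (hVmem k)) (hVmem i))
      _ (mul_mem (hWmem l) (star_mem (hWmem j)))
    simp only [Matrix.star_eq_conjTranspose, conjTranspose_mul,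
      conjTranspose_conjTranspose] at h2
    show ((V i * W j)ᴴ * (V k * W l)).trace = _
    rw [h1, h2, hVorth, Matrix.trace_mul_comm (W l), hWorth]
    simp only [Fintype.card_fin]
    by_cases hik : i = k <;> by_cases hjl : j = l <;>
      simp [hik, hjl, Prod.ext_iff, div_eq_mul_inv]
  have hQspan : Submodule.span ℂ (Set.range Q) = ⊤ := by
    rw [eq_top_iff, ← hspanM]
    refine Submodule.span_le.2 ?_
    rintro x ⟨A, hA, B, hB, rfl⟩
    have hAs : A ∈ Submodule.span ℂ (Set.range V) := by
      rw [hVspan]; exact Submodule.subset_span hA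
    have hBs : B ∈ Submodule.span ℂ (Set.range W) := by
      rw [hWspan]; exact Submodule.subset_span hB
    clear hA hB
    induction hAs using Submodule.span_induction with
    | mem a ha =>
      obtain ⟨i, rfl⟩ := ha
      induction hBs using Submodule.span_induction with
      | mem b hb =>
        obtain ⟨j, rfl⟩ := hb
        exact Submodule.subset_span ⟨(i, j), rfl⟩
      | zero => rw [Matrix.mul_zero]; exact zero_mem _
      | add b b' _ _ ih ih' => rw [Matrix.mul_add]; exact add_mem ih ih'
      | smul a b _ ih => rw [Matrix.mul_smul]; exact Submodule.smul_mem _ _ ih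
    | zero => rw [Matrix.zero_mul]; exact zero_mem _
    | add a a' _ _ ih ih' => rw [Matrix.add_mul]; exact add_mem ih ih'
    | smul a b _ ih => rw [Matrix.smul_mul]; exact Submodule.smul_mem _ _ ih
  have hcard : m₁ * m₂ = n ^ 2 := by
    have h := aux_card_eq_sq ((n:ℂ)⁻¹) (inv_ne_zero hn') Q hQorth hQspan
    simpa [Fintype.card_prod] using h
  refine ⟨?_, hcard⟩
  have hTmem : (∑ i, (V i)ᴴ * V i) ∈ 𝒜₁ :=
    sum_mem fun i _ => mul_mem (star_mem (hVmem i)) (hVmem i)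
  have hTcomm : ∀ A, A ∈ 𝒜₁ → A * (∑ i, (V i)ᴴ * V i) = (∑ i, (V i)ᴴ * V i) * A := by
    intro A hA
    have h := aux_phi_comm 𝒜₁ V hVmem hVorth hVspan 1 hA
    simpa [Matrix.mul_one] using h
  have htrT : (∑ i, (V i)ᴴ * V i).trace = (m₁ : ℂ) := by
    rw [Matrix.trace_sum]
    simp [hVorth]
  have hmid : ∑ i, (V i)ᴴ * (∑ i', (V i')ᴴ * V i') * V i
      = (∑ i, (V i)ᴴ * V i) * (∑ i, (V i)ᴴ * V i) := by
    have h : ∀ i, (V i)ᴴ * (∑ i', (V i')ᴴ * V i') * V i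
        = ((V i)ᴴ * V i) * (∑ i', (V i')ᴴ * V i') := by
      intro i
      rw [Matrix.mul_assoc, ← hTcomm (V i) (hVmem i), ← Matrix.mul_assoc]
    rw [Finset.sum_congr rfl fun i _ => h i, ← Finset.sum_mul]
  have hcomp := aux_completeness ((n:ℂ)⁻¹) (inv_ne_zero hn') Q hQorth hQspan
    (∑ i, (V i)ᴴ * V i)
  have hswap : ∑ k : Fin m₁ × Fin m₂, (Q k)ᴴ * (∑ i, (V i)ᴴ * V i) * Q k
      = ∑ j, (W j)ᴴ * ((∑ i, (V i)ᴴ * V i) * (∑ i, (V i)ᴴ * V i)) * W j := by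
    rw [Fintype.sum_prod_type, Finset.sum_comm]
    refine Finset.sum_congr rfl fun j _ => ?_
    rw [← hmid, Finset.mul_sum, Finset.sum_mul]
    refine Finset.sum_congr rfl fun i _ => ?_
    show (V i * W j)ᴴ * _ * (V i * W j) = _
    rw [conjTranspose_mul]
    simp only [Matrix.mul_assoc]
  have hkey : ∑ j, (W j)ᴴ * ((∑ i, (V i)ᴴ * V i) * (∑ i, (V i)ᴴ * V i)) * W j
      = ((n:ℂ)⁻¹ * (m₁:ℂ)) • 1 := by
    rw [← hswap, hcomp, htrT]
  have hterm : ∀ j, ((W j)ᴴ * ((∑ i, (V i)ᴴ * V i) * (∑ i, (V i)ᴴ * V i)) * W j).trace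
      = ((∑ i, (V i)ᴴ * V i) * (∑ i, (V i)ᴴ * V i)).trace / n := by
    intro j
    have h2 := hc _ (star_mem (mul_mem hTmem hTmem)) _ (mul_mem (hWmem j) (star_mem (hWmem j)))
    simp only [Matrix.star_eq_conjTranspose, conjTranspose_conjTranspose,
      Fintype.card_fin] at h2
    have h3 : (W j * (W j)ᴴ).trace = 1 := by
      rw [Matrix.trace_mul_comm, hWorth]; simp
    rw [h3, mul_one] at h2
    rw [Matrix.trace_mul_comm, ← Matrix.mul_assoc, Matrix.trace_mul_comm]
    exact h2
  have hnsq : n ^ 2 ≠ 0 := by positivity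
  have hm1 : (m₁ : ℂ) ≠ 0 := by
    refine Nat.cast_ne_zero.2 fun h0 => ?_
    rw [h0, zero_mul] at hcard
    exact hnsq hcard.symm
  have hm2 : (m₂ : ℂ) ≠ 0 := by
    refine Nat.cast_ne_zero.2 fun h0 => ?_
    rw [h0, mul_zero] at hcard
    exact hnsq hcard.symm
  have hnn : (m₁ : ℂ) * (m₂ : ℂ) = (n : ℂ) ^ 2 := by
    exact_mod_cast congrArg (Nat.cast (R := ℂ)) hcard
  have hsum' : ((∑ i, (V i)ᴴ * V i) * (∑ i, (V i)ᴴ * V i)).trace * m₂ = (m₁ : ℂ) * n := by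
    have h4 := congrArg Matrix.trace hkey
    rw [Matrix.trace_sum] at h4
    rw [Finset.sum_congr rfl fun j _ => hterm j] at h4
    simp only [Finset.sum_const, Finset.card_univ, Fintype.card_fin, nsmul_eq_mul,
      Matrix.trace_smul, Matrix.trace_one, smul_eq_mul] at h4
    field_simp at h4
    linear_combination h4
  have htrT2 : ((∑ i, (V i)ᴴ * V i) * (∑ i, (V i)ᴴ * V i)).trace = (m₁:ℂ)^2 / n := by
    rw [eq_div_iff hn']
    have hfin : ((∑ i, (V i)ᴴ * V i) * (∑ i, (V i)ᴴ * V i)).trace * (n:ℂ) * m₂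
        = (m₁:ℂ)^2 * m₂ := by linear_combination (n:ℂ) * hsum' - (m₁:ℂ) * hnn
    exact mul_right_cancel₀ hm2 hfin
  have hTstar : (∑ i, (V i)ᴴ * V i)ᴴ = ∑ i, (V i)ᴴ * V i := by
    rw [Matrix.conjTranspose_sum]
    exact Finset.sum_congr rfl fun i _ => by
      rw [conjTranspose_mul, conjTranspose_conjTranspose]
  have hstarc : star ((m₁:ℂ)/(n:ℂ)) = (m₁:ℂ)/(n:ℂ) := by
    rw [star_div₀, star_natCast, star_natCast]
  have hzero : (((∑ i, (V i)ᴴ * V i) - ((m₁:ℂ)/n) • 1)ᴴ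
      * ((∑ i, (V i)ᴴ * V i) - ((m₁:ℂ)/n) • 1)).trace = 0 := by
    rw [conjTranspose_sub, Matrix.conjTranspose_smul, conjTranspose_one, hTstar, hstarc]
    simp only [Matrix.sub_mul, Matrix.mul_sub, Matrix.smul_mul, Matrix.mul_smul,
      Matrix.one_mul, Matrix.mul_one, Matrix.trace_sub, Matrix.trace_smul, smul_eq_mul,
      Matrix.trace_one, htrT, htrT2, smul_smul]
    simp only [Fintype.card_fin]
    field_simp
    ring
  have hfin := aux_eq_zero_of_trace_star_self _ hzero
  exact sub_eq_zero.1 hfin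

/-- If 𝒜₁, 𝒜₂ are complementary subalgebras of M_n(ℂ) whose products span M_n and
{U_i} is an orthonormal basis of 𝒜₁ (of cardinality m₁ = dim 𝒜₁), then
E(X) = (n / m₁) ∑_i U_i* X U_i is the trace-preserving conditional expectation
onto 𝒜₁′, and (dim 𝒜₁)(dim 𝒜₂) = n². -/
theorem condExp_onto_commutant_of_products_span (n : ℕ)
    (𝒜₁ 𝒜₂ : StarSubalgebra ℂ (Matrix (Fin n) (Fin n) ℂ))
    (hc : Complementary (𝒜₁ : Set (Matrix (Fin n) (Fin n) ℂ)) (𝒜₂ : Set (Matrix (Fin n) (Fin n) ℂ)))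
    (hspanM : Submodule.span ℂ
      {X : Matrix (Fin n) (Fin n) ℂ | ∃ A ∈ 𝒜₁, ∃ B ∈ 𝒜₂, X = A * B} = ⊤)
    (m₁ m₂ : ℕ)
    (U : Fin m₁ → Matrix (Fin n) (Fin n) ℂ)
    (hUmem : ∀ i, U i ∈ 𝒜₁)
    (hUorth : ∀ i j, ((U i)ᴴ * U j).trace = if i = j then (1 : ℂ) else 0)
    (hUspan : Submodule.span ℂ (Set.range U)
      = Submodule.span ℂ (𝒜₁ : Set (Matrix (Fin n) (Fin n) ℂ)))
    (W : Fin m₂ → Matrix (Fin n) (Fin n) ℂ)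
    (hWmem : ∀ i, W i ∈ 𝒜₂)
    (hWorth : ∀ i j, ((W i)ᴴ * W j).trace = if i = j then (1 : ℂ) else 0)
    (hWspan : Submodule.span ℂ (Set.range W)
      = Submodule.span ℂ (𝒜₂ : Set (Matrix (Fin n) (Fin n) ℂ)))
    (E : Matrix (Fin n) (Fin n) ℂ → Matrix (Fin n) (Fin n) ℂ)
    (hE : ∀ X, E X = ((n : ℂ) / (m₁ : ℂ)) • ∑ i, (U i)ᴴ * X * U i) :
    (IsCondExp (matCommutant (𝒜₁ : Set (Matrix (Fin n) (Fin n) ℂ))) E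
        ∧ ∀ X, (E X).trace = X.trace)
      ∧ m₁ * m₂ = n ^ 2 := by
  rcases Nat.eq_zero_or_pos n with hn | hn
  · subst hn
    have hm1 : m₁ = 0 := by
      by_contra h
      have i : Fin m₁ := ⟨0, Nat.pos_of_ne_zero h⟩
      have h1 := hUorth i i
      rw [if_pos rfl] at h1
      simp [Matrix.trace] at h1
    refine ⟨⟨⟨fun X A hA => ?_, fun X A hA => ?_⟩, fun X => ?_⟩, by simp [hm1]⟩
    · exact Matrix.ext fun i _ => i.elim0
    · simp [Matrix.trace]
    · simp [Matrix.trace]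
  -- main case `0 < n`
  have hV : ∀ i, (fun k => (U k)ᴴ) i ∈ 𝒜₁ := fun i => star_mem (hUmem i)
  have hVorth := aux_star_orth U hUorth
  have hVspan : Submodule.span ℂ (Set.range fun k => (U k)ᴴ)
      = Submodule.span ℂ (𝒜₁ : Set (Matrix (Fin n) (Fin n) ℂ)) := by
    refine le_antisymm (Submodule.span_le.2 ?_) (Submodule.span_le.2 ?_)
    · rintro x ⟨i, rfl⟩
      exact Submodule.subset_span (hV i)
    · intro x hx
      exact aux_mem_span_star 𝒜₁ U hUspan hx
  obtain ⟨hT', hcard⟩ := aux_T_scalar hn 𝒜₁ 𝒜₂ hc hspanM (fun k => (U k)ᴴ) hV hVorth hVspan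
    W hWmem hWorth hWspan
  simp only [conjTranspose_conjTranspose] at hT'
  -- hT' : ∑ i, U i * (U i)ᴴ = (m₁ / n) • 1
  have hn' : (n : ℂ) ≠ 0 := Nat.cast_ne_zero.2 hn.ne'
  have hnsq : n ^ 2 ≠ 0 := by positivity
  have hm1 : (m₁ : ℂ) ≠ 0 := by
    refine Nat.cast_ne_zero.2 fun h0 => ?_
    rw [h0, zero_mul] at hcard
    exact hnsq hcard.symm
  refine ⟨⟨⟨fun X A hA => ?_, fun X A hA => ?_⟩, fun X => ?_⟩, hcard⟩
  · -- E X lies in the commutant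
    rw [hE X, Matrix.mul_smul, Matrix.smul_mul,
      aux_phi_comm 𝒜₁ U hUmem hUorth hUspan X hA]
  · -- orthogonality
    have hAcomm : ∀ i, U i * Aᴴ = Aᴴ * U i := by
      intro i
      have h := hA (U i)ᴴ (star_mem (hUmem i))
      have h2 := congrArg Matrix.conjTranspose h
      simpa only [conjTranspose_mul, conjTranspose_conjTranspose] using h2.symm
    have hterm : ∀ i, (Aᴴ * ((U i)ᴴ * X * U i)).trace
        = ((X * Aᴴ) * (U i * (U i)ᴴ)).trace := by
      intro i
      calc (Aᴴ * ((U i)ᴴ * X * U i)).trace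
          = ((Aᴴ * ((U i)ᴴ * X)) * U i).trace := by simp only [Matrix.mul_assoc]
        _ = (U i * (Aᴴ * ((U i)ᴴ * X))).trace := (Matrix.trace_mul_comm _ _).symm
        _ = ((U i * Aᴴ) * ((U i)ᴴ * X)).trace := by simp only [Matrix.mul_assoc]
        _ = ((Aᴴ * U i) * ((U i)ᴴ * X)).trace := by rw [hAcomm i]
        _ = (((U i)ᴴ * X) * (Aᴴ * U i)).trace := Matrix.trace_mul_comm _ _
        _ = (((U i)ᴴ * (X * Aᴴ)) * U i).trace := by simp only [Matrix.mul_assoc]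
        _ = (U i * ((U i)ᴴ * (X * Aᴴ))).trace := (Matrix.trace_mul_comm _ _).symm
        _ = ((X * Aᴴ) * (U i * (U i)ᴴ)).trace := by
            rw [← Matrix.mul_assoc, Matrix.trace_mul_comm, ← Matrix.mul_assoc]
    have hEtr : (Aᴴ * E X).trace = (Aᴴ * X).trace := by
      rw [hE X, Matrix.mul_smul, Matrix.trace_smul, smul_eq_mul, Finset.mul_sum,
        Matrix.trace_sum, Finset.sum_congr rfl fun i _ => hterm i, ← Matrix.trace_sum,
        ← Finset.mul_sum, hT', Matrix.mul_smul, Matrix.trace_smul, smul_eq_mul,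
        Matrix.trace_mul_comm]
      field_simp
      rw [Matrix.one_mul, Matrix.trace_mul_comm X Aᴴ]
    rw [Matrix.mul_sub, Matrix.trace_sub, hEtr, sub_self]
  · -- trace preservation
    have hterm : ∀ i, ((U i)ᴴ * X * U i).trace = ((U i * (U i)ᴴ) * X).trace := by
      intro i
      rw [Matrix.trace_mul_comm, ← Matrix.mul_assoc]
    rw [hE X, Matrix.trace_smul, smul_eq_mul, Matrix.trace_sum,
      Finset.sum_congr rfl fun i _ => hterm i, ← Matrix.trace_sum, ← Finset.sum_mul, hT',
      Matrix.smul_mul, Matrix.trace_smul, smul_eq_mul, Matrix.one_mul]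
    field_simp
end

section
/- Two subalgebras 𝒜_1, 𝒜_2 of M_n(ℂ) are complementary if and only if the composition E_1 ∘ E_2 of the trace-preserving conditional expectations E_i : M_n → 𝒜_i equals the map X ↦ (Tr X / n)·I. -/
open Matrix BigOperators

lemma aux_trace_zero {ι : Type*} [Fintype ι] (D : Matrix ι ι ℂ)
    (h : (Dᴴ * D).trace = 0) : D = 0 := by
  have h2 : (∑ j, ∑ k, (Complex.normSq (D k j) : ℂ)) = 0 := by
    rw [← h, Matrix.trace, ← Finset.sum_congr rfl]
    intro j _
    simp [Matrix.mul_apply, Matrix.conjTranspose_apply, Complex.star_def,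
      Complex.normSq_eq_conj_mul_self]
  rw [show ((∑ j, ∑ k, (Complex.normSq (D k j) : ℂ))) =
      ((∑ j, ∑ k, Complex.normSq (D k j) : ℝ) : ℂ) by push_cast; ring] at h2
  rw [Complex.ofReal_eq_zero] at h2
  ext k j
  have := (Finset.sum_eq_zero_iff_of_nonneg
    (fun j _ => Finset.sum_nonneg fun k _ => Complex.normSq_nonneg _)).mp h2 j (Finset.mem_univ j)
  have := (Finset.sum_eq_zero_iff_of_nonneg
    (fun k _ => Complex.normSq_nonneg _)).mp this k (Finset.mem_univ k)
  simpa using Complex.normSq_eq_zero.mp this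

lemma aux_fix {ι : Type*} [Fintype ι] [DecidableEq ι]
    {𝒜 : StarSubalgebra ℂ (Matrix ι ι ℂ)} {E : Matrix ι ι ℂ → Matrix ι ι ℂ}
    (h : IsCondExp (𝒜 : Set (Matrix ι ι ℂ)) E) {B : Matrix ι ι ℂ}
    (hB : B ∈ 𝒜) : E B = B := by
  have hD : B - E B ∈ 𝒜 := sub_mem hB (h.1 B)
  have := h.2 B (B - E B) hD
  have hz := aux_trace_zero _ this
  rw [sub_eq_zero] at hz
  exact hz.symm

/-- Two subalgebras 𝒜₁, 𝒜₂ of M_n(ℂ) are complementary iff the composition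
E₁ ∘ E₂ of their trace-preserving conditional expectations is X ↦ (Tr X / n)·I. -/
theorem complementary_iff_condExp_comp_eq_trace (n : ℕ)
    (𝒜₁ 𝒜₂ : StarSubalgebra ℂ (Matrix (Fin n) (Fin n) ℂ))
    (E₁ E₂ : Matrix (Fin n) (Fin n) ℂ → Matrix (Fin n) (Fin n) ℂ)
    (h1 : IsCondExp (𝒜₁ : Set (Matrix (Fin n) (Fin n) ℂ)) E₁)
    (h2 : IsCondExp (𝒜₂ : Set (Matrix (Fin n) (Fin n) ℂ)) E₂)
    (ht1 : ∀ X, (E₁ X).trace = X.trace)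
    (ht2 : ∀ X, (E₂ X).trace = X.trace) :
    Complementary (𝒜₁ : Set (Matrix (Fin n) (Fin n) ℂ)) (𝒜₂ : Set (Matrix (Fin n) (Fin n) ℂ)) ↔
      ∀ X, E₁ (E₂ X) = (X.trace / (n : ℂ)) • (1 : Matrix (Fin n) (Fin n) ℂ) := by
  constructor
  · intro hc X
    set c : ℂ := X.trace / (n : ℂ) with hcdef
    set D : Matrix (Fin n) (Fin n) ℂ := E₁ (E₂ X) - c • 1 with hDdef
    have hDmem : D ∈ 𝒜₁ := sub_mem (h1.1 _) (SMulMemClass.smul_mem c (one_mem 𝒜₁))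
    -- Tr(Dᴴ * E₁(E₂X)) = Tr(Dᴴ * E₂X)
    have horth := h1.2 (E₂ X) D hDmem
    have key1 : (Dᴴ * E₁ (E₂ X)).trace = (Dᴴ * E₂ X).trace := by
      rw [Matrix.mul_sub, Matrix.trace_sub, sub_eq_zero] at horth
      exact horth.symm
    have hq := hc D hDmem (E₂ X) (h2.1 X)
    rw [ht2 X] at hq
    have hsm : (Dᴴ * (c • (1 : Matrix (Fin n) (Fin n) ℂ))).trace = c * Dᴴ.trace := by
      rw [Matrix.mul_smul, Matrix.mul_one, Matrix.trace_smul, smul_eq_mul]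
    have hz : (Dᴴ * D).trace = 0 := by
      rw [hDdef, Matrix.mul_sub, Matrix.trace_sub, ← hDdef, key1, hq, hsm,
        Fintype.card_fin, hcdef]
      ring
    have hD0 := aux_trace_zero D hz
    rw [hDdef, sub_eq_zero] at hD0
    exact hD0
  · intro hE A hA B hB
    have hfix : E₂ B = B := aux_fix h2 hB
    have horth := h1.2 B A hA
    rw [Matrix.mul_sub, Matrix.trace_sub, sub_eq_zero] at horth
    rw [horth, ← hfix, hE B, hfix]
    rw [Matrix.mul_smul, Matrix.mul_one, Matrix.trace_smul]
    simp [Fintype.card_fin]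
    ring
end
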